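/- arXiv:2506.12271 — 3 statements merged into one kernel-verified Lean document; each statement's English description precedes it below -/
import Mathlib

section
/- Let G be an oriented hypergraph and (S,c) a diagonally reduced contributor of G with unused edge set T. Then the contributor-dual assignment c*: E∖T → I×I, c*(ω(t_v)) = (h_v, t_{π_c(v)}) for v ∈ V∖S, is well defined, and (T, c*) is a diagonally reduced contributor of the incidence dual G* whose unused set is S. In particular, every diagonally reduced contributor of G has a contributor dual in G*. -/
open Matrix
open scoped Classical

noncomputable section

/-- An oriented hypergraph `G = (V, E, I, ς, ω, σ)`: `vtx = ς` assigns each incidence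
its vertex, `edg = ω` assigns each incidence its edge, and `sgn = σ` is its sign. -/
structure OHG (V E I : Type*) where
  vtx : I → V
  edg : I → E
  sgn : I → ℤˣ

/-- The incidence dual `G* = (E, V, I, ω, ς, σ)`. -/
def OHG.dual {V E I : Type*} (G : OHG V E I) : OHG E V I :=
  ⟨G.edg, G.vtx, G.sgn⟩

section Defs

variable {V E I : Type*} [Fintype V] [DecidableEq V] [Fintype E] [DecidableEq E]
  [Fintype I] [DecidableEq I]

/-- A diagonally reduced contributor `(S, c)`: `c : V∖S → I × I`, tails sit at their
vertices, tail and head share an edge, the head map is a permutation of `V∖S`, and `c`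
is edge-monic. -/
def IsDiagRed (G : OHG V E I) (S : Finset V) (c : {v : V // v ∉ S} → I × I) : Prop :=
  (∀ v, G.vtx (c v).1 = v.1) ∧ (∀ v, G.edg (c v).1 = G.edg (c v).2) ∧
    Set.BijOn (fun v : {v : V // v ∉ S} => G.vtx (c v).2) Set.univ {w : V | w ∉ S} ∧
    Function.Injective fun v : {v : V // v ∉ S} => G.edg (c v).1

/-- The unused edge set `T = E ∖ {ω (t_v) : v ∈ V∖S}` of a diagonally reduced
contributor. -/
def unusedT (G : OHG V E I) (S : Finset V) (c : {v : V // v ∉ S} → I × I) :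
    Finset E :=
  Finset.univ.filter fun e => ∀ v : {v : V // v ∉ S}, G.edg (c v).1 ≠ e

/-- The head map of a diagonally reduced contributor, extended to all of `V` by the
identity on `S`. -/
def gmapD (G : OHG V E I) (S : Finset V) (c : {v : V // v ∉ S} → I × I) : V → V :=
  fun v => if h : v ∈ S then v else G.vtx (c ⟨v, h⟩).2

/-- The orbit of `v` under iteration of `f` (for `f` a bijection of a finite type this
is the full cycle of `v`). -/
def orbitOf {α : Type*} [Fintype α] [DecidableEq α] (f : α → α) (a : α) : Finset α :=
  Finset.univ.filter fun b => ∃ n : ℕ, f^[n] a = b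

/-- The set of orbits of `f`. -/
def orbitsOf {α : Type*} [Fintype α] [DecidableEq α] (f : α → α) :
    Finset (Finset α) :=
  Finset.univ.image (orbitOf f)

/-- `ec c`: the number of orbits of `π_c` of even cardinality. -/
def ecD (G : OHG V E I) (S : Finset V) (c : {v : V // v ∉ S} → I × I) : ℕ :=
  ((orbitsOf (gmapD G S c)).filter fun O => Even O.card).card

/-- `bs c`: the number of backsteps of a diagonally reduced contributor. -/
def bsD (G : OHG V E I) (S : Finset V) (c : {v : V // v ∉ S} → I × I) : ℕ :=
  (Finset.univ.filter fun v : {v : V // v ∉ S} => (c v).1 = (c v).2).card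

/-- A negative orbit: not a single backstep, and the product of the adjacency signs
`-σ(t_v)·σ(h_v)` over the orbit is `-1`. -/
def NegOrbitD (G : OHG V E I) (S : Finset V) (c : {v : V // v ∉ S} → I × I)
    (O : Finset V) : Prop :=
  (¬ ∃ v : {v : V // v ∉ S}, O = {v.1} ∧ (c v).1 = (c v).2) ∧
    ∏ v ∈ Finset.univ.filter (fun v : {v : V // v ∉ S} => v.1 ∈ O),
      (-(G.sgn (c v).1 * G.sgn (c v).2)) = (-1 : ℤˣ)

/-- `nc c`: the number of negative orbits of a diagonally reduced contributor. -/
def ncD (G : OHG V E I) (S : Finset V) (c : {v : V // v ∉ S} → I × I) : ℕ :=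
  ((orbitsOf (gmapD G S c)).filter (NegOrbitD G S c)).card

/-- The sign `csgn c = (-1) ^ (ec c + nc c + bs c)` of a diagonally reduced
contributor. -/
def csgnD (G : OHG V E I) (S : Finset V) (c : {v : V // v ∉ S} → I × I) : ℤ :=
  (-1) ^ (ecD G S c + ncD G S c + bsD G S c)

/-- The incidence matrix of an oriented hypergraph. -/
def incM (G : OHG V E I) : Matrix V E ℤ :=
  Matrix.of fun v e =>
    ∑ i ∈ Finset.univ.filter (fun i => G.vtx i = v ∧ G.edg i = e), (G.sgn i : ℤ)

/-- The Laplacian `L = H Hᵀ` of an oriented hypergraph. -/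
def lapM (G : OHG V E I) : Matrix V V ℤ :=
  incM G * (incM G)ᵀ

end Defs

variable {V E I : Type*} [Fintype V] [DecidableEq V] [Fintype E] [DecidableEq E]
  [Fintype I] [DecidableEq I]

/-- For a diagonally reduced contributor `(S, c)` of `G` with unused
edge set `T`, the contributor-dual assignment `c* (ω (t_v)) = (h_v, t_{π_c v})` is well
defined, and `(T, c*)` is a diagonally reduced contributor of the incidence dual `G*`
whose unused set is `S`. -/
theorem diagRed_has_dual (G : OHG V E I) (S : Finset V)
    (c : {v : V // v ∉ S} → I × I) (hc : IsDiagRed G S c) :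
    ∃ cd : {e : E // e ∉ unusedT G S c} → I × I,
      (∀ (v : {v : V // v ∉ S}) (he : G.edg (c v).1 ∉ unusedT G S c)
          (hp : G.vtx (c v).2 ∉ S),
          cd ⟨G.edg (c v).1, he⟩ = ((c v).2, (c ⟨G.vtx (c v).2, hp⟩).1)) ∧
      IsDiagRed G.dual (unusedT G S c) cd ∧
      unusedT G.dual (unusedT G S c) cd = S := by
  classical
  obtain ⟨h1, h2, ⟨hmaps, hinj, hsurj⟩, hmon⟩ := hc
  have hpiinj : Function.Injective fun v : {v : V // v ∉ S} => G.vtx (c v).2 := by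
    intro a b hab; exact hinj (Set.mem_univ a) (Set.mem_univ b) hab
  have hpS : ∀ v : {v : V // v ∉ S}, G.vtx (c v).2 ∉ S := fun v => hmaps (Set.mem_univ v)
  have hnotT : ∀ v : {v : V // v ∉ S}, G.edg (c v).1 ∉ unusedT G S c := by
    intro v hT
    exact (Finset.mem_filter.mp hT).2 v rfl
  have hex : ∀ e : {e : E // e ∉ unusedT G S c}, ∃ v, G.edg (c v).1 = e.1 := by
    intro e
    by_contra h
    push_neg at h
    exact e.2 (Finset.mem_filter.mpr ⟨Finset.mem_univ _, h⟩)
  choose vof hvof using hex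
  have hvof_inj : Function.Injective vof := by
    intro a b hab
    ext : 1
    rw [← hvof a, ← hvof b, hab]
  have hvof_eq : ∀ (v : {v : V // v ∉ S}) (he : G.edg (c v).1 ∉ unusedT G S c),
      vof ⟨G.edg (c v).1, he⟩ = v := fun v he => hmon (hvof _)
  refine ⟨fun e => ((c (vof e)).2, (c ⟨G.vtx (c (vof e)).2, hpS _⟩).1), ?_, ⟨?_, ?_, ⟨?_, ?_, ?_⟩, ?_⟩, ?_⟩
  · intro v he hp
    simp only [hvof_eq v he]
  · intro e
    show G.edg (c (vof e)).2 = e.1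
    rw [← h2, hvof e]
  · intro e
    show G.vtx (c (vof e)).2 = G.vtx (c ⟨G.vtx (c (vof e)).2, hpS _⟩).1
    rw [h1]
  · -- MapsTo
    intro e _
    show G.edg (c (⟨G.vtx (c (vof e)).2, hpS _⟩ : {v : V // v ∉ S})).1 ∉ unusedT G S c
    exact hnotT _
  · -- InjOn
    intro a _ b _ hab
    simp only at hab
    have hw : (⟨G.vtx (c (vof a)).2, hpS _⟩ : {v : V // v ∉ S}) =
        ⟨G.vtx (c (vof b)).2, hpS _⟩ := hmon hab
    have : G.vtx (c (vof a)).2 = G.vtx (c (vof b)).2 := congrArg Subtype.val hw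
    have : vof a = vof b := hpiinj this
    ext : 1
    rw [← hvof a, ← hvof b, this]
  · -- SurjOn
    intro f hf
    set v := vof ⟨f, hf⟩ with hvdef
    have hv : G.edg (c v).1 = f := hvof ⟨f, hf⟩
    obtain ⟨u, _, hu⟩ := hsurj v.2
    simp only at hu
    refine ⟨⟨G.edg (c u).1, hnotT u⟩, Set.mem_univ _, ?_⟩
    show G.edg (c (⟨G.vtx (c (vof _)).2, hpS _⟩ : {v : V // v ∉ S})).1 = f
    rw [hvof_eq u]
    have : (⟨G.vtx (c u).2, hpS u⟩ : {v : V // v ∉ S}) = v := by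
      ext; exact hu
    rw [this, hv]
  · -- edge-monic
    intro a b hab
    simp only at hab
    have : vof a = vof b := hpiinj hab
    ext : 1
    rw [← hvof a, ← hvof b, this]
  · -- unused set is S
    ext w
    rw [unusedT, Finset.mem_filter_univ]
    constructor
    · intro h
      by_contra hw
      obtain ⟨u, _, hu⟩ := hsurj (show w ∈ {w : V | w ∉ S} from hw)
      simp only at hu
      exact h ⟨G.edg (c u).1, hnotT u⟩ (by rw [hvof_eq u]; exact hu)
    · intro hw e
      show G.vtx (c (vof e)).2 ≠ w
      intro h
      exact hpS (vof e) (h ▸ hw)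
end
end

section
/- Let G be an oriented hypergraph, S ⊆ V, and c: V∖S → I×I a map, c(v)=(t_v,h_v), with ς(t_v)=v and ω(t_v)=ω(h_v) for all v∈V∖S such that π_c(v)=ς(h_v) is a permutation of V∖S (edge-monicity not assumed). If the reversed-pair assignment ω(h_v) ↦ (h_v, t_{π_c(v)}) is single-valued, i.e., there exists a function c′ on {ω(h_v) : v∈V∖S} with c′(ω(h_v)) = (h_v, t_{π_c(v)}) for every v∈V∖S (so that c admits a contributor-dual), then v ↦ ω(t_v) is injective on V∖S; that is, a reduced contributor that has a contributor-dual must be edge-monic. -/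
open Matrix
open scoped Classical

noncomputable section

variable {V E I : Type*} [Fintype V] [DecidableEq V] [Fintype E] [DecidableEq E]
  [Fintype I] [DecidableEq I]

/-- Let `c : V∖S → I × I` satisfy the reduced-contributor conditions
with head map a permutation of `V∖S` (edge-monicity not assumed). If the reversed-pair
assignment `ω (h_v) ↦ (h_v, t_{π_c v})` is single-valued, i.e. there is a function `c′`
on `{ω (h_v) : v ∈ V∖S}` with `c′ (ω (h_v)) = (h_v, t_{π_c v})` for every `v` (so that
`c` admits a contributor-dual), then `v ↦ ω (t_v)` is injective: a reduced contributor
that has a contributor-dual must be edge-monic. -/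
theorem edgeMonic_of_has_dual (G : OHG V E I) (S : Finset V)
    (c : {v : V // v ∉ S} → I × I)
    (h1 : ∀ v, G.vtx (c v).1 = v.1)
    (h2 : ∀ v, G.edg (c v).1 = G.edg (c v).2)
    (h3 : Set.BijOn (fun v : {v : V // v ∉ S} => G.vtx (c v).2) Set.univ
      {w : V | w ∉ S})
    (hdual : ∃ c' : {e : E // ∃ v : {v : V // v ∉ S}, G.edg (c v).2 = e} → I × I,
      ∀ (v : {v : V // v ∉ S}) (hp : G.vtx (c v).2 ∉ S),
        c' ⟨G.edg (c v).2, ⟨v, rfl⟩⟩ = ((c v).2, (c ⟨G.vtx (c v).2, hp⟩).1)) :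
    Function.Injective fun v : {v : V // v ∉ S} => G.edg (c v).1 := by
  intro u w h
  simp only at h
  obtain ⟨c', hc'⟩ := hdual
  have hu : G.vtx (c u).2 ∉ S := h3.1 (Set.mem_univ u)
  have hw : G.vtx (c w).2 ∉ S := h3.1 (Set.mem_univ w)
  have he : G.edg (c u).2 = G.edg (c w).2 := by rw [← h2, ← h2, h]
  have h1' := hc' u hu
  have h2' := hc' w hw
  have hsub : (⟨G.edg (c u).2, ⟨u, rfl⟩⟩ :
      {e : E // ∃ v : {v : V // v ∉ S}, G.edg (c v).2 = e}) =
      ⟨G.edg (c w).2, ⟨w, rfl⟩⟩ := Subtype.ext he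
  rw [hsub, h2'] at h1'
  have hh : (c u).2 = (c w).2 := (congrArg Prod.fst h1').symm
  exact h3.2.1 (Set.mem_univ u) (Set.mem_univ w) (by simp [hh])
end
end

section
/- Let G be an oriented hypergraph and (S,c) a diagonally reduced contributor of G with unused edge set T, and let (T,c*) be its contributor-dual in G*, c*(ω(t_v)) = (h_v, t_{π_c(v)}). Then csgn(c*) = csgn(c). -/
open Matrix
open scoped Classical

noncomputable section

section AuxOrbit

variable {α : Type*} [Fintype α] [DecidableEq α]

lemma mem_orbitOf {f : α → α} {a b : α} : b ∈ orbitOf f a ↔ ∃ n : ℕ, f^[n] a = b := by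
  simp [orbitOf]

lemma self_mem_orbitOf (f : α → α) (a : α) : a ∈ orbitOf f a :=
  mem_orbitOf.mpr ⟨0, rfl⟩

lemma orbitOf_fixed {f : α → α} {a : α} (h : f a = a) : orbitOf f a = {a} := by
  ext b
  simp only [mem_orbitOf, Finset.mem_singleton]
  constructor
  · rintro ⟨n, rfl⟩
    exact Function.iterate_fixed h n
  · rintro rfl; exact ⟨0, rfl⟩

lemma mem_orbitsOf {f : α → α} {O : Finset α} :
    O ∈ orbitsOf f ↔ ∃ a, orbitOf f a = O := by
  simp [orbitsOf]

lemma orbitOf_mem_orbitsOf (f : α → α) (a : α) : orbitOf f a ∈ orbitsOf f :=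
  mem_orbitsOf.mpr ⟨a, rfl⟩

lemma apply_mem_orbitOf {f : α → α} {a b : α} (h : b ∈ orbitOf f a) :
    f b ∈ orbitOf f a := by
  obtain ⟨n, rfl⟩ := mem_orbitOf.mp h
  exact mem_orbitOf.mpr ⟨n + 1, Function.iterate_succ_apply' f n a⟩

end AuxOrbit

variable {V E I : Type*} [Fintype V] [DecidableEq V] [Fintype E] [DecidableEq E]
  [Fintype I] [DecidableEq I]

/-- If `(S, c)` is a diagonally reduced contributor of `G` with
unused edge set `T` and `(T, c*)` is its contributor-dual in `G*`, given by
`c* (ω (t_v)) = (h_v, t_{π_c v})`, then `csgn c* = csgn c`. -/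
theorem csgn_dual_eq (G : OHG V E I) (S : Finset V)
    (c : {v : V // v ∉ S} → I × I) (hc : IsDiagRed G S c)
    (cd : {e : E // e ∉ unusedT G S c} → I × I)
    (hcd : ∀ (v : {v : V // v ∉ S}) (he : G.edg (c v).1 ∉ unusedT G S c)
        (hp : G.vtx (c v).2 ∉ S),
        cd ⟨G.edg (c v).1, he⟩ = ((c v).2, (c ⟨G.vtx (c v).2, hp⟩).1)) :
    csgnD G.dual (unusedT G S c) cd = csgnD G S c := by
  classical
  obtain ⟨h1, h2, h3, h4⟩ := hc
  -- heads land outside S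
  have hhead : ∀ v : {v : V // v ∉ S}, G.vtx (c v).2 ∉ S := fun v =>
    h3.mapsTo (Set.mem_univ v)
  set P : {v : V // v ∉ S} → {v : V // v ∉ S} := fun v => ⟨G.vtx (c v).2, hhead v⟩ with hPdef
  have hPinj : Function.Injective P := by
    intro a b hab
    exact h3.injOn (Set.mem_univ a) (Set.mem_univ b) (Subtype.ext_iff.mp hab)
  have hmemT : ∀ v : {v : V // v ∉ S}, G.edg (c v).1 ∉ unusedT G S c := by
    intro v hv
    simp only [unusedT, Finset.mem_filter] at hv
    exact hv.2 v rfl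
  set φ : {v : V // v ∉ S} → {e : E // e ∉ unusedT G S c} :=
    fun v => ⟨G.edg (c v).1, hmemT v⟩ with hφdef
  have hφinj : Function.Injective φ := fun a b hab => h4 (Subtype.ext_iff.mp hab)
  have hφsurj : Function.Surjective φ := by
    intro b
    have hb := b.2
    simp only [unusedT, Finset.mem_filter, Finset.mem_univ, true_and, not_forall,
      not_not] at hb
    obtain ⟨v, hv⟩ := hb
    exact ⟨v, Subtype.ext hv⟩
  have hcd' : ∀ v : {v : V // v ∉ S}, cd (φ v) = ((c v).2, (c (P v)).1) :=
    fun v => hcd v (hmemT v) (hhead v)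
  set f := gmapD G S c with hfdef
  set g := gmapD G.dual (unusedT G S c) cd with hgdef
  have hfv : ∀ v : {v : V // v ∉ S}, f v.1 = (P v).1 := fun v => dif_neg v.2
  have hfs : ∀ s ∈ S, f s = s := fun s hs => dif_pos hs
  have hgt : ∀ e ∈ unusedT G S c, g e = e := fun e he => dif_pos he
  have hgv : ∀ v : {v : V // v ∉ S}, g (φ v).1 = (φ (P v)).1 := by
    intro v
    have h0 : g (φ v).1 = G.dual.vtx (cd (φ v)).2 := dif_neg (φ v).2
    rw [h0, hcd' v]
    rfl
  have hfn : ∀ (n : ℕ) (v : {v : V // v ∉ S}), f^[n] v.1 = (P^[n] v).1 := by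
    intro n
    induction n with
    | zero => intro v; rfl
    | succ n ih =>
        intro v
        rw [Function.iterate_succ_apply', Function.iterate_succ_apply', ih, hfv]
  have hgn : ∀ (n : ℕ) (v : {v : V // v ∉ S}), g^[n] (φ v).1 = (φ (P^[n] v)).1 := by
    intro n
    induction n with
    | zero => intro v; rfl
    | succ n ih =>
        intro v
        rw [Function.iterate_succ_apply', Function.iterate_succ_apply', ih, hgv]
  have horbf_sub : ∀ (v : {v : V // v ∉ S}) (b : V), b ∈ orbitOf f v.1 → b ∉ S := by
    intro v b hb
    obtain ⟨n, rfl⟩ := mem_orbitOf.mp hb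
    rw [hfn n v]; exact (P^[n] v).2
  set Fm : Finset V → Finset E := fun O =>
    (Finset.univ.filter fun w : {v : V // v ∉ S} => w.1 ∈ O).image
      (fun w => (φ w).1) with hFmdef
  have hmemFm : ∀ (O : Finset V) (e : E),
      e ∈ Fm O ↔ ∃ w : {v : V // v ∉ S}, w.1 ∈ O ∧ (φ w).1 = e := by
    intro O e
    simp [hFmdef]
  have hmemFm' : ∀ (O : Finset V) (w : {v : V // v ∉ S}),
      (φ w).1 ∈ Fm O ↔ w.1 ∈ O := by
    intro O w
    rw [hmemFm]
    constructor
    · rintro ⟨w', hw', h⟩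
      rwa [← hφinj (Subtype.ext h)]
    · intro h; exact ⟨w, h, rfl⟩
  have hFmap : ∀ v : {v : V // v ∉ S}, Fm (orbitOf f v.1) = orbitOf g (φ v).1 := by
    intro v
    ext e
    rw [hmemFm, mem_orbitOf]
    constructor
    · rintro ⟨w, hw, rfl⟩
      obtain ⟨n, hn⟩ := mem_orbitOf.mp hw
      have hw' : P^[n] v = w := Subtype.ext (by rw [← hfn n v, hn])
      exact ⟨n, by rw [hgn n v, hw']⟩
    · rintro ⟨n, rfl⟩
      exact ⟨P^[n] v, mem_orbitOf.mpr ⟨n, hfn n v⟩, (hgn n v).symm⟩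
  have hFminj : ∀ O1 O2 : Finset V, (∀ b ∈ O1, b ∉ S) → (∀ b ∈ O2, b ∉ S) →
      Fm O1 = Fm O2 → O1 = O2 := by
    have key : ∀ O1 O2 : Finset V, (∀ b ∈ O1, b ∉ S) →
        Fm O1 = Fm O2 → O1 ⊆ O2 := by
      intro O1 O2 hs1 h b hb
      have hb' : (φ ⟨b, hs1 b hb⟩).1 ∈ Fm O1 := (hmemFm' O1 ⟨b, hs1 b hb⟩).mpr hb
      rw [h] at hb'
      exact (hmemFm' O2 _).mp hb'
    intro O1 O2 hs1 hs2 h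
    exact le_antisymm (key O1 O2 hs1 h) (key O2 O1 hs2 h.symm)
  have hfilter_card : ∀ O : Finset V, (∀ b ∈ O, b ∉ S) →
      (Finset.univ.filter fun w : {v : V // v ∉ S} => w.1 ∈ O).card = O.card := by
    intro O hs
    apply Finset.card_bij (fun w _ => w.1)
    · intro w hw; exact (Finset.mem_filter.mp hw).2
    · intro a _ b _ h; exact Subtype.ext h
    · intro b hb
      exact ⟨⟨b, hs b hb⟩, Finset.mem_filter.mpr ⟨Finset.mem_univ _, hb⟩, rfl⟩
  have hcardFm : ∀ O : Finset V, (∀ b ∈ O, b ∉ S) → (Fm O).card = O.card := by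
    intro O hs
    have hinj : Function.Injective (fun w : {v : V // v ∉ S} => (φ w).1) :=
      fun a b h => hφinj (Subtype.ext h)
    rw [hFmdef]
    simp only
    rw [Finset.card_image_of_injective _ hinj]
    exact hfilter_card O hs
  have horbf : ∀ O ∈ orbitsOf f,
      (∃ s ∈ S, O = {s}) ∨ ∃ v : {v : V // v ∉ S}, O = orbitOf f v.1 := by
    intro O hO
    obtain ⟨a, rfl⟩ := mem_orbitsOf.mp hO
    by_cases ha : a ∈ S
    · exact Or.inl ⟨a, ha, orbitOf_fixed (hfs a ha)⟩
    · exact Or.inr ⟨⟨a, ha⟩, rfl⟩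
  have horbg : ∀ O ∈ orbitsOf g,
      (∃ t ∈ unusedT G S c, O = {t}) ∨
        ∃ v : {v : V // v ∉ S}, O = orbitOf g (φ v).1 := by
    intro O hO
    obtain ⟨a, rfl⟩ := mem_orbitsOf.mp hO
    by_cases ha : a ∈ unusedT G S c
    · exact Or.inl ⟨a, ha, orbitOf_fixed (hgt a ha)⟩
    · obtain ⟨v, hv⟩ := hφsurj ⟨a, ha⟩
      exact Or.inr ⟨v, by rw [hv]⟩
  -- backstep correspondence
  have hPfix : ∀ w : {v : V // v ∉ S}, (c w).1 = (c w).2 → P w = w := by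
    intro w h
    apply Subtype.ext
    show G.vtx (c w).2 = w.1
    rw [← h, h1]
  have hbsiff : ∀ w : {v : V // v ∉ S},
      ((cd (φ w)).1 = (cd (φ w)).2 ↔ (c w).1 = (c w).2) := by
    intro w
    have e1 : (cd (φ w)).1 = (c w).2 := by rw [hcd' w]
    have e2 : (cd (φ w)).2 = (c (P w)).1 := by rw [hcd' w]
    rw [e1, e2]
    constructor
    · intro h
      have he : G.edg (c (P w)).1 = G.edg (c w).1 := by rw [← h, ← h2 w]
      have hPw : P w = w := h4 he
      rw [hPw] at h
      exact h.symm
    · intro h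
      rw [hPfix w h]
      exact h.symm
  -- singleton orbits on fixed points are never even
  have heven_sub : ∀ O ∈ orbitsOf f, Even O.card → ∀ b ∈ O, b ∉ S := by
    intro O hO hE
    rcases horbf O hO with ⟨s, hs, rfl⟩ | ⟨v, rfl⟩
    · simp at hE
    · exact horbf_sub v
  have hec : ecD G.dual (unusedT G S c) cd = ecD G S c := by
    unfold ecD
    rw [← hfdef, ← hgdef]
    symm
    apply Finset.card_bij (fun O _ => Fm O)
    · intro O hO
      obtain ⟨hO1, hO2⟩ := Finset.mem_filter.mp hO
      rcases horbf O hO1 with ⟨s, hs, rfl⟩ | ⟨v, rfl⟩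
      · simp at hO2
      · refine Finset.mem_filter.mpr ⟨?_, ?_⟩
        · rw [hFmap v]; exact orbitOf_mem_orbitsOf g _
        · rwa [hcardFm _ (horbf_sub v)]
    · intro O1 hO1 O2 hO2 h
      have m1 := Finset.mem_filter.mp hO1
      have m2 := Finset.mem_filter.mp hO2
      exact hFminj _ _ (heven_sub _ m1.1 m1.2) (heven_sub _ m2.1 m2.2) h
    · intro O' hO'
      obtain ⟨hO1, hO2⟩ := Finset.mem_filter.mp hO'
      rcases horbg O' hO1 with ⟨t, ht, rfl⟩ | ⟨v, rfl⟩
      · simp at hO2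
      · refine ⟨orbitOf f v.1,
          Finset.mem_filter.mpr ⟨orbitOf_mem_orbitsOf f _, ?_⟩, hFmap v⟩
        have hc1 := hcardFm _ (horbf_sub v)
        rw [hFmap v] at hc1
        rw [← hc1]
        exact hO2
  -- singleton orbits on fixed points are never negative
  have hnotnegS : ∀ s ∈ S, ¬ NegOrbitD G S c {s} := by
    intro s hs hneg
    obtain ⟨-, hprod⟩ := hneg
    have hempty : (Finset.univ.filter
        fun w : {v : V // v ∉ S} => w.1 ∈ ({s} : Finset V)) = ∅ := by
      ext w
      simp only [Finset.mem_filter, Finset.mem_univ, true_and, Finset.mem_singleton,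
        Finset.notMem_empty, iff_false]
      intro h
      exact w.2 (h ▸ hs)
    rw [hempty, Finset.prod_empty] at hprod
    exact absurd hprod (by decide)
  have hnotnegT : ∀ t ∈ unusedT G S c,
      ¬ NegOrbitD G.dual (unusedT G S c) cd {t} := by
    intro t ht hneg
    obtain ⟨-, hprod⟩ := hneg
    have hempty : (Finset.univ.filter
        fun b : {e : E // e ∉ unusedT G S c} => b.1 ∈ ({t} : Finset E)) = ∅ := by
      ext b
      simp only [Finset.mem_filter, Finset.mem_univ, true_and, Finset.mem_singleton,
        Finset.notMem_empty, iff_false]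
      intro h
      exact b.2 (h ▸ ht)
    rw [hempty, Finset.prod_empty] at hprod
    exact absurd hprod (by decide)
  have hFmsingle : ∀ w : {v : V // v ∉ S}, Fm ({w.1} : Finset V) = {(φ w).1} := by
    intro w
    ext e
    rw [hmemFm]
    simp only [Finset.mem_singleton]
    constructor
    · rintro ⟨w', hw', rfl⟩
      rw [show w' = w from Subtype.ext hw']
    · rintro rfl
      exact ⟨w, rfl, rfl⟩
  -- product over the dual orbit equals product over the orbit
  have hprodB : ∀ v : {v : V // v ∉ S},
      ∏ b ∈ Finset.univ.filter
          (fun b : {e : E // e ∉ unusedT G S c} => b.1 ∈ Fm (orbitOf f v.1)),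
        (-(G.dual.sgn (cd b).1 * G.dual.sgn (cd b).2)) =
      ∏ w ∈ Finset.univ.filter
          (fun w : {v : V // v ∉ S} => w.1 ∈ orbitOf f v.1),
        (-(G.sgn (c w).1 * G.sgn (c w).2)) := by
    intro v
    set O := orbitOf f v.1 with hOdef
    set s := Finset.univ.filter (fun w : {v : V // v ∉ S} => w.1 ∈ O) with hsdef
    have himg : (Finset.univ.filter
        fun b : {e : E // e ∉ unusedT G S c} => b.1 ∈ Fm O) = s.image φ := by
      ext b
      constructor
      · intro hb
        obtain ⟨w, hw, h⟩ := (hmemFm O b.1).mp (Finset.mem_filter.mp hb).2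
        exact Finset.mem_image.mpr
          ⟨w, Finset.mem_filter.mpr ⟨Finset.mem_univ _, hw⟩, Subtype.ext h⟩
      · intro hb
        obtain ⟨w, hw, rfl⟩ := Finset.mem_image.mp hb
        exact Finset.mem_filter.mpr ⟨Finset.mem_univ _,
          (hmemFm O _).mpr ⟨w, (Finset.mem_filter.mp hw).2, rfl⟩⟩
    rw [himg, Finset.prod_image (fun a _ b _ h => hφinj h)]
    have hterm : ∀ w : {v : V // v ∉ S},
        (-(G.dual.sgn (cd (φ w)).1 * G.dual.sgn (cd (φ w)).2)) =
          (-(G.sgn (c w).2)) * G.sgn (c (P w)).1 := by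
      intro w
      rw [hcd' w]
      show -(G.sgn (c w).2 * G.sgn (c (P w)).1) = _
      rw [neg_mul]
    rw [Finset.prod_congr rfl (fun w _ => hterm w), Finset.prod_mul_distrib]
    have hP_s : s.image P = s := by
      apply Finset.eq_of_subset_of_card_le
      · intro x hx
        obtain ⟨w, hw, rfl⟩ := Finset.mem_image.mp hx
        have hwO : w.1 ∈ O := (Finset.mem_filter.mp hw).2
        have : (P w).1 ∈ O := by
          rw [← hfv w]
          exact apply_mem_orbitOf hwO
        exact Finset.mem_filter.mpr ⟨Finset.mem_univ _, this⟩
      · rw [Finset.card_image_of_injective _ hPinj]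
    have hshift : ∏ w ∈ s, G.sgn (c (P w)).1 = ∏ w ∈ s, G.sgn (c w).1 := by
      conv_rhs => rw [← hP_s]
      rw [Finset.prod_image (fun a _ b _ h => hPinj h)]
    rw [hshift, ← Finset.prod_mul_distrib]
    refine Finset.prod_congr rfl fun w _ => ?_
    rw [neg_mul, mul_comm]
  have hnegiff : ∀ v : {v : V // v ∉ S},
      (NegOrbitD G.dual (unusedT G S c) cd (Fm (orbitOf f v.1)) ↔
        NegOrbitD G S c (orbitOf f v.1)) := by
    intro v
    unfold NegOrbitD
    refine and_congr (not_congr ?_) (by rw [hprodB v])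
    constructor
    · rintro ⟨b, hb1, hb2⟩
      obtain ⟨w, rfl⟩ := hφsurj b
      have hwO : w.1 ∈ orbitOf f v.1 := by
        refine (hmemFm' _ w).mp ?_
        rw [hb1]
        exact Finset.mem_singleton_self _
      have hwsingle : orbitOf f v.1 = {w.1} := by
        refine Finset.eq_singleton_iff_unique_mem.mpr ⟨hwO, ?_⟩
        intro b' hb'
        have hb'S := horbf_sub v b' hb'
        have hmem : (φ ⟨b', hb'S⟩).1 ∈ Fm (orbitOf f v.1) := (hmemFm' _ _).mpr hb'
        rw [hb1, Finset.mem_singleton] at hmem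
        have := hφinj (Subtype.ext hmem)
        exact congrArg Subtype.val this
      exact ⟨w, hwsingle, (hbsiff w).mp hb2⟩
    · rintro ⟨w, hw1, hw2⟩
      exact ⟨φ w, by rw [hw1, hFmsingle], (hbsiff w).mpr hw2⟩
  have hneg_sub : ∀ O ∈ orbitsOf f, NegOrbitD G S c O → ∀ b ∈ O, b ∉ S := by
    intro O hO hN
    rcases horbf O hO with ⟨t, ht, rfl⟩ | ⟨v, rfl⟩
    · exact absurd hN (hnotnegS t ht)
    · exact horbf_sub v
  have hnc : ncD G.dual (unusedT G S c) cd = ncD G S c := by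
    unfold ncD
    rw [← hfdef, ← hgdef]
    symm
    apply Finset.card_bij (fun O _ => Fm O)
    · intro O hO
      obtain ⟨hO1, hO2⟩ := Finset.mem_filter.mp hO
      rcases horbf O hO1 with ⟨t, ht, rfl⟩ | ⟨v, rfl⟩
      · exact absurd hO2 (hnotnegS t ht)
      · refine Finset.mem_filter.mpr ⟨?_, (hnegiff v).mpr hO2⟩
        rw [hFmap v]
        exact orbitOf_mem_orbitsOf g _
    · intro O1 hO1 O2 hO2 h
      have m1 := Finset.mem_filter.mp hO1
      have m2 := Finset.mem_filter.mp hO2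
      exact hFminj _ _ (hneg_sub _ m1.1 m1.2) (hneg_sub _ m2.1 m2.2) h
    · intro O' hO'
      obtain ⟨hO1, hO2⟩ := Finset.mem_filter.mp hO'
      rcases horbg O' hO1 with ⟨t, ht, rfl⟩ | ⟨v, rfl⟩
      · exact absurd hO2 (hnotnegT t ht)
      · refine ⟨orbitOf f v.1,
          Finset.mem_filter.mpr ⟨orbitOf_mem_orbitsOf f _, (hnegiff v).mp ?_⟩, hFmap v⟩
        rw [hFmap v]
        exact hO2
  have hbs : bsD G.dual (unusedT G S c) cd = bsD G S c := by
    unfold bsD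
    symm
    apply Finset.card_bij (fun w _ => φ w)
    · intro w hw
      exact Finset.mem_filter.mpr
        ⟨Finset.mem_univ _, (hbsiff w).mpr (Finset.mem_filter.mp hw).2⟩
    · intro a _ b _ h
      exact hφinj h
    · intro b hb
      obtain ⟨w, rfl⟩ := hφsurj b
      exact ⟨w, Finset.mem_filter.mpr
        ⟨Finset.mem_univ _, (hbsiff w).mp (Finset.mem_filter.mp hb).2⟩, rfl⟩
  unfold csgnD
  rw [hec, hnc, hbs]
end
end
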